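/- Let p : ℝ^n → ℝ^n be an orthogonal projection (a self-adjoint idempotent linear map) such that p(ℤ^n) ⊆ ℤ^n. Then the image of p is spanned by a subset of the standard basis vectors: there exists a set I ⊆ {1,…,n} such that range(p) = span{e_i : i ∈ I}, where (e_i) is the canonical basis of ℝ^n. Equivalently, for each i, p(e_i) ∈ {0, ±e₁, …, ±e_n}. -/

import Mathlib

noncomputable section

open Finset Module

/-- A vector of `ℝⁿ` with integer coordinates. -/
def IsIntVec {n : ℕ} (v : EuclideanSpace ℝ (Fin n)) : Prop :=
  ∀ i, ∃ z : ℤ, v i = (z : ℝ)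

/-- A rational subspace of `ℝⁿ`: one spanned by vectors with rational coordinates. -/
def IsRationalSubspace {n : ℕ} (B : Submodule ℝ (EuclideanSpace ℝ (Fin n))) : Prop :=
  ∃ s : Set (EuclideanSpace ℝ (Fin n)),
    (∀ v ∈ s, ∀ i, ∃ q : ℚ, v i = (q : ℝ)) ∧ Submodule.span ℝ s = B

/-- `A` is `(e,j)`-irrational: every rational subspace `B` of dimension `e` satisfies
`dim (A ⊓ B) < j + g(dim A, e, n)` where `g(d,e,n) = max 0 (d+e-n)`. -/
def IsIrrational {n : ℕ} (A : Submodule ℝ (EuclideanSpace ℝ (Fin n))) (e j : ℕ) : Prop :=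
  ∀ B : Submodule ℝ (EuclideanSpace ℝ (Fin n)),
    IsRationalSubspace B → finrank ℝ B = e →
      finrank ℝ ↥(A ⊓ B) < j + (finrank ℝ A + e - n)

/-- The angle `ω(X,Y) = ‖X∧Y‖ / (‖X‖·‖Y‖)`. -/
def omegaAngle {n : ℕ} (X Y : EuclideanSpace ℝ (Fin n)) : ℝ :=
  Real.sqrt (‖X‖ ^ 2 * ‖Y‖ ^ 2 - (inner ℝ X Y : ℝ) ^ 2) / (‖X‖ * ‖Y‖)

/-- First angle `ψ₁(A,B)` between two subspaces. -/
def psiOne {n : ℕ} (A B : Submodule ℝ (EuclideanSpace ℝ (Fin n))) : ℝ :=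
  sInf {t | ∃ X ∈ A, X ≠ 0 ∧ ∃ Y ∈ B, Y ≠ 0 ∧ t = omegaAngle X Y}

/-- `‖X₁ ∧ ⋯ ∧ X_e‖`, as the square root of the Gram determinant. -/
def gramNorm {n e : ℕ} (X : Fin e → EuclideanSpace ℝ (Fin n)) : ℝ :=
  Real.sqrt (Matrix.of fun i j : Fin e => (inner ℝ (X i) (X j) : ℝ)).det

/-- `X` is a `ℤ`-basis of the lattice `B ∩ ℤⁿ`. -/
def IsZBasis {n e : ℕ} (X : Fin e → EuclideanSpace ℝ (Fin n))
    (B : Submodule ℝ (EuclideanSpace ℝ (Fin n))) : Prop :=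
  (∀ i, X i ∈ B) ∧ (∀ i, IsIntVec (X i)) ∧ LinearIndependent ℝ X ∧
    ∀ v ∈ B, IsIntVec v → ∃ c : Fin e → ℤ, v = ∑ i, (c i : ℝ) • X i

/-- The height `H(B)` of a rational subspace: the common value of `‖X₁ ∧ ⋯ ∧ X_e‖`
over `ℤ`-bases of the lattice `B ∩ ℤⁿ`. -/
def height {n : ℕ} (B : Submodule ℝ (EuclideanSpace ℝ (Fin n))) : ℝ :=
  sSup {h | ∃ e : ℕ, ∃ X : Fin e → EuclideanSpace ℝ (Fin n), IsZBasis X B ∧ h = gramNorm X}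

/-- The Diophantine exponent `μ_n(A|e)₁ ∈ ℝ ∪ {+∞}`. -/
def diophExp {n : ℕ} (A : Submodule ℝ (EuclideanSpace ℝ (Fin n))) (e : ℕ) : EReal :=
  sSup {x : EReal | ∃ μ : ℝ, x = (μ : ℝ) ∧ 0 < μ ∧
    {B : Submodule ℝ (EuclideanSpace ℝ (Fin n)) |
      IsRationalSubspace B ∧ finrank ℝ B = e ∧ psiOne A B ≤ height B ^ (-μ)}.Infinite}

/-- An orthogonal projection `p : ℝⁿ → ℝⁿ` (idempotent, with kernel and
image orthogonal) mapping `ℤⁿ` into `ℤⁿ` has image spanned by a subset of the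
standard basis vectors. -/
theorem statement8 (n : ℕ)
    (p : EuclideanSpace ℝ (Fin n) →ₗ[ℝ] EuclideanSpace ℝ (Fin n))
    (hidem : p ∘ₗ p = p)
    (horth : ∀ x ∈ LinearMap.ker p, ∀ y ∈ LinearMap.range p, (inner ℝ x y : ℝ) = 0)
    (hint : ∀ v, IsIntVec v → IsIntVec (p v)) :
    ∃ I : Set (Fin n),
      LinearMap.range p =
        Submodule.span ℝ ((fun i => EuclideanSpace.single i (1 : ℝ)) '' I) := by
  classical
  set e : Fin n → EuclideanSpace ℝ (Fin n) := fun i => EuclideanSpace.single i (1 : ℝ) with he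
  have hidem' : ∀ v, p (p v) = p v := fun v => congrArg (fun f => f v) (congrArg DFunLike.coe hidem)
  have hsa : ∀ x y : EuclideanSpace ℝ (Fin n), (inner ℝ (p x) y : ℝ) = inner ℝ x (p y) := by
    intro x y
    have hx : x - p x ∈ LinearMap.ker p := by
      simp [LinearMap.mem_ker, map_sub, hidem']
    have hy : y - p y ∈ LinearMap.ker p := by
      simp [LinearMap.mem_ker, map_sub, hidem']
    have h1 : (inner ℝ (x - p x) (p y) : ℝ) = 0 := horth _ hx _ ⟨y, rfl⟩
    have h2 : (inner ℝ (y - p y) (p x) : ℝ) = 0 := horth _ hy _ ⟨x, rfl⟩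
    rw [inner_sub_left, sub_eq_zero] at h1 h2
    have h3 := real_inner_comm (p x) y
    have h4 := real_inner_comm (p y) (p x)
    linarith
  -- entry fact: (p v) i = ⟪e i, p v⟫
  have happ : ∀ (v : EuclideanSpace ℝ (Fin n)) (i : Fin n), (inner ℝ (e i) (p v) : ℝ) = p v i := by
    intro v i
    rw [he]
    simp [EuclideanSpace.inner_single_left]
  have hkey : ∀ i j, p (e j) i = ∑ k, p (e i) k * p (e j) k := by
    intro i j
    have h1 : (inner ℝ (p (e i)) (p (e j)) : ℝ) = p (e j) i := by
      rw [hsa, hidem', happ]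
    rw [← h1, PiLp.inner_apply]
    simp [RCLike.inner_apply, mul_comm]
  have hdich : ∀ i, p (e i) = 0 ∨ p (e i) = e i := by
    intro i
    have hiv : IsIntVec (p (e i)) := by
      apply hint
      intro k
      rw [he]
      simp only [EuclideanSpace.single_apply]
      exact ⟨if k = i then 1 else 0, by split <;> simp⟩
    choose z hz using hiv
    have hdiag : (z i : ℝ) = ∑ k, (z k : ℝ)^2 := by
      have := hkey i i
      simp_rw [hz] at this
      rw [this]
      ring_nf
    have hdiagZ : z i = ∑ k, (z k)^2 := by exact_mod_cast hdiag
    have hle : (z i)^2 ≤ ∑ k, (z k)^2 :=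
      Finset.single_le_sum (f := fun k => (z k)^2) (fun k _ => sq_nonneg _) (mem_univ i)
    have hb1 : 0 ≤ z i := by nlinarith
    have hb2 : z i ≤ 1 := by nlinarith [sq_nonneg (z i - 1)]
    have hzi : z i = 0 ∨ z i = 1 := by omega
    rcases hzi with h0 | h1
    · left
      have hall : ∀ k, z k = 0 := by
        intro k
        have hsum : ∑ k, (z k)^2 = 0 := by omega
        have := (Finset.sum_eq_zero_iff_of_nonneg (fun k _ => sq_nonneg (z k))).mp hsum k (mem_univ k)
        nlinarith [sq_nonneg (z k)]
      ext k
      rw [hz k, hall k]; simp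
    · right
      have hall : ∀ k, k ≠ i → z k = 0 := by
        intro k hk
        have hsum : ∑ k, (z k)^2 = 1 := by omega
        have hsplit : (z i)^2 + ∑ k ∈ univ.erase i, (z k)^2 = 1 := by
          rw [add_comm, Finset.sum_erase_add _ _ (mem_univ i)]; exact hsum
        rw [h1] at hsplit
        have : ∑ k ∈ univ.erase i, (z k)^2 = 0 := by omega
        have := (Finset.sum_eq_zero_iff_of_nonneg (fun k _ => sq_nonneg (z k))).mp this k (Finset.mem_erase.mpr ⟨hk, mem_univ k⟩)
        nlinarith [sq_nonneg (z k)]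
      ext k
      rw [hz k, he]
      simp only [EuclideanSpace.single_apply]
      by_cases hk : k = i
      · subst hk; rw [h1]; simp
      · rw [hall k hk]; simp [hk]
  refine ⟨{i | p (e i) = e i}, le_antisymm ?_ ?_⟩
  · rintro _ ⟨v, rfl⟩
    have hv : v = ∑ i, v i • e i := by
      have h := (EuclideanSpace.basisFun (Fin n) ℝ).sum_repr v
      simp only [EuclideanSpace.basisFun_repr, EuclideanSpace.basisFun_apply, ← he] at h
      exact h.symm
    rw [hv, map_sum]
    apply Submodule.sum_mem
    intro i _
    rw [map_smul]
    rcases hdich i with h0 | h1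
    · rw [h0]; simp
    · rw [h1]
      exact Submodule.smul_mem _ _ (Submodule.subset_span ⟨i, h1, rfl⟩)
  · rw [Submodule.span_le]
    rintro _ ⟨i, hi, rfl⟩
    exact ⟨e i, hi⟩
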